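/- arXiv:1211.0182 — 3 statements merged into one kernel-verified Lean document; each statement's English description precedes it below -/
import Mathlib

section
/- Let V be a set, let Γ be a nonempty collection of nonempty subsets of V, let p > 1 and C ≥ 0. Let R, R' : V → ℝ be functions with R(u) ≥ 0 and R'(u) ≥ 0 for all u ∈ V, such that R'(u) ≤ R(u) + C · R(u)^{1 + 1/p} and R(u) ≤ R'(u) + C · R'(u)^{1 + 1/p} for all u ∈ V, and assume that for each G ∈ Γ the sets {R(u) : u ∈ G} and {R'(u) : u ∈ G} are bounded above. Define λ = inf_{G ∈ Γ} sup_{u ∈ G} R(u) and λ' = inf_{G ∈ Γ} sup_{u ∈ G} R'(u). Then |λ − λ'| ≤ C · max{λ, λ'}^{1 + 1/p}. -/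
open Filter Topology

private lemma infSup_nonneg_aux (V : Type*) (Γ : Set (Set V)) (hΓ : Γ.Nonempty)
    (hGne : ∀ G ∈ Γ, G.Nonempty) (R : V → ℝ) (hR0 : ∀ u, 0 ≤ R u)
    (hbdd : ∀ G ∈ Γ, BddAbove (R '' G)) :
    0 ≤ ⨅ G : Γ, sSup (R '' (G : Set V)) := by
  apply Real.iInf_nonneg
  rintro ⟨G, hG⟩
  obtain ⟨u, hu⟩ := hGne G hG
  exact le_trans (hR0 u) (le_csSup (hbdd G hG) ⟨u, hu, rfl⟩)

private lemma infSup_one_sided (V : Type*) (Γ : Set (Set V)) (hΓ : Γ.Nonempty)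
    (hGne : ∀ G ∈ Γ, G.Nonempty) (q C : ℝ) (hq : 0 < q) (hC : 0 ≤ C)
    (R R' : V → ℝ) (hR0 : ∀ u, 0 ≤ R u) (hR'0 : ∀ u, 0 ≤ R' u)
    (hRR' : ∀ u, R' u ≤ R u + C * R u ^ q)
    (hbdd : ∀ G ∈ Γ, BddAbove (R '' G)) (hbdd' : ∀ G ∈ Γ, BddAbove (R' '' G)) :
    (⨅ G : Γ, sSup (R' '' (G : Set V))) ≤
      (⨅ G : Γ, sSup (R '' (G : Set V))) + C * (⨅ G : Γ, sSup (R '' (G : Set V))) ^ q := by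
  haveI : Nonempty ↥Γ := hΓ.to_subtype
  set lam := ⨅ G : Γ, sSup (R '' (G : Set V)) with hlam
  set lam' := ⨅ G : Γ, sSup (R' '' (G : Set V)) with hlam'
  have hlam0 : 0 ≤ lam := infSup_nonneg_aux V Γ hΓ hGne R hR0 hbdd
  -- monotone bound function
  have mono : ∀ a b : ℝ, 0 ≤ a → a ≤ b → a + C * a ^ q ≤ b + C * b ^ q := by
    intro a b ha hab
    have := Real.rpow_le_rpow ha hab hq.le
    nlinarith
  have key : ∀ ε > (0:ℝ), lam' ≤ (lam + ε) + C * (lam + ε) ^ q := by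
    intro ε hε
    have : lam < lam + ε := by linarith
    obtain ⟨⟨G, hG⟩, hGlt⟩ := exists_lt_of_ciInf_lt this
    have hsnn : 0 ≤ sSup (R '' G) := by
      obtain ⟨u, hu⟩ := hGne G hG
      exact le_trans (hR0 u) (le_csSup (hbdd G hG) ⟨u, hu, rfl⟩)
    have h1 : sSup (R' '' G) ≤ sSup (R '' G) + C * sSup (R '' G) ^ q := by
      apply Real.sSup_le _ (by nlinarith [Real.rpow_nonneg hsnn q])
      rintro x ⟨u, hu, rfl⟩
      have hRu : R u ≤ sSup (R '' G) := le_csSup (hbdd G hG) ⟨u, hu, rfl⟩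
      exact le_trans (hRR' u) (mono (R u) _ (hR0 u) hRu)
    have h2 : lam' ≤ sSup (R' '' G) := by
      apply ciInf_le _ (⟨G, hG⟩ : Γ)
      refine ⟨0, ?_⟩
      rintro x ⟨⟨G', hG'⟩, rfl⟩
      obtain ⟨u, hu⟩ := hGne G' hG'
      exact le_trans (hR'0 u) (le_csSup (hbdd' G' hG') ⟨u, hu, rfl⟩)
    calc lam' ≤ sSup (R '' G) + C * sSup (R '' G) ^ q := le_trans h2 h1
      _ ≤ (lam + ε) + C * (lam + ε) ^ q := mono _ _ hsnn hGlt.le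
  -- take ε → 0⁺
  have hcont : ContinuousAt (fun x : ℝ => x + C * x ^ q) lam := by
    have h1 : ContinuousAt (fun x : ℝ => x ^ q) lam :=
      Real.continuousAt_rpow_const lam q (Or.inr hq.le)
    exact continuousAt_id.add (continuousAt_const.mul h1)
  have htend : Tendsto (fun ε : ℝ => (lam + ε) + C * (lam + ε) ^ q)
      (𝓝[>] (0:ℝ)) (𝓝 (lam + C * lam ^ q)) := by
    have h0 : Tendsto (fun ε : ℝ => lam + ε) (𝓝[>] (0:ℝ)) (𝓝 lam) := by
      have := (tendsto_const_nhds (x := lam)).add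
        (tendsto_id (x := 𝓝 (0:ℝ)))
      simpa using this.mono_left nhdsWithin_le_nhds
    exact hcont.tendsto.comp h0
  refine ge_of_tendsto htend ?_
  filter_upwards [self_mem_nhdsWithin] with ε hε
  exact key ε hε

/-- Abstract two-sided min–max comparison: if `R' ≤ R + C·R^{1+1/p}` and
`R ≤ R' + C·R'^{1+1/p}` pointwise, with `R, R' ≥ 0` and bounded above on each
admissible set, then the inf-sup values satisfy `|λ − λ'| ≤ C·max(λ,λ')^{1+1/p}`. -/
theorem infSup_comparison_two_sided (V : Type*) (Γ : Set (Set V)) (hΓ : Γ.Nonempty)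
    (hGne : ∀ G ∈ Γ, G.Nonempty) (p C : ℝ) (hp : 1 < p) (hC : 0 ≤ C)
    (R R' : V → ℝ) (hR0 : ∀ u, 0 ≤ R u) (hR'0 : ∀ u, 0 ≤ R' u)
    (hRR' : ∀ u, R' u ≤ R u + C * R u ^ (1 + 1 / p))
    (hR'R : ∀ u, R u ≤ R' u + C * R' u ^ (1 + 1 / p))
    (hbdd : ∀ G ∈ Γ, BddAbove (R '' G)) (hbdd' : ∀ G ∈ Γ, BddAbove (R' '' G)) :
    |(⨅ G : Γ, sSup (R '' (G : Set V))) - (⨅ G : Γ, sSup (R' '' (G : Set V)))| ≤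
      C * max (⨅ G : Γ, sSup (R '' (G : Set V)))
              (⨅ G : Γ, sSup (R' '' (G : Set V))) ^ (1 + 1 / p) := by
  set q := 1 + 1 / p with hqdef
  have hq : 0 < q := by
    have h : 0 < 1 / p := by positivity
    rw [hqdef]; linarith
  set lam := ⨅ G : Γ, sSup (R '' (G : Set V)) with hlam
  set lam' := ⨅ G : Γ, sSup (R' '' (G : Set V)) with hlam'
  have hlam0 : 0 ≤ lam := infSup_nonneg_aux V Γ hΓ hGne R hR0 hbdd
  have hlam'0 : 0 ≤ lam' := infSup_nonneg_aux V Γ hΓ hGne R' hR'0 hbdd'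
  have h1 : lam' ≤ lam + C * lam ^ q :=
    infSup_one_sided V Γ hΓ hGne q C hq hC R R' hR0 hR'0 hRR' hbdd hbdd'
  have h2 : lam ≤ lam' + C * lam' ^ q :=
    infSup_one_sided V Γ hΓ hGne q C hq hC R' R hR'0 hR0 hR'R hbdd' hbdd
  have hm1 : lam ^ q ≤ max lam lam' ^ q :=
    Real.rpow_le_rpow hlam0 (le_max_left _ _) hq.le
  have hm2 : lam' ^ q ≤ max lam lam' ^ q :=
    Real.rpow_le_rpow hlam'0 (le_max_right _ _) hq.le
  rw [abs_sub_le_iff]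
  constructor <;> nlinarith
end

section
/- Let ρ : ℝ → ℝ be a 1-periodic function which is integrable on [0,1] and satisfies ∫₀¹ ρ(t) dt = 0. Then for every ε > 0 and every continuously differentiable function v : ℝ → ℝ with v(0) = v(1) = 0, | ∫₀¹ ρ(x/ε) v(x) dx | ≤ (1/2) · (∫₀¹ |ρ(t)| dt) · ε · ∫₀¹ |v'(x)| dx. -/
open MeasureTheory intervalIntegral

-- Step 1: periodic + integrable on one period ⇒ integrable on any interval
theorem aux_perInt (ρ : ℝ → ℝ) (hper : Function.Periodic ρ 1)
    (hint : IntervalIntegrable ρ volume 0 1) :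
    ∀ a b : ℝ, IntervalIntegrable ρ volume a b := by
  have key : ∀ n : ℤ, IntervalIntegrable ρ volume n (n + 1) := by
    intro n
    have h := hint.comp_sub_right (n : ℝ)
    have : (fun x : ℝ => ρ (x - (n : ℝ))) = ρ := by
      funext x
      simpa using hper.sub_int_mul_eq (x := x) n
    rw [this] at h
    simpa [add_comm] using h
  have step : ∀ (m : ℤ) (j : ℕ), IntervalIntegrable ρ volume m (m + j) := by
    intro m j
    induction j with
    | zero => simp
    | succ j ih =>
      have : ((m : ℝ) + (j + 1 : ℕ)) = ((m + j : ℤ) : ℝ) + 1 := by push_cast; ring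
      rw [this]
      exact ih.trans (by simpa using key (m + j))
  intro a b
  wlog hab : a ≤ b generalizing a b
  · exact (this b a (le_of_not_ge hab)).symm
  set m : ℤ := ⌊a⌋
  set k : ℤ := max m ⌈b⌉
  have hjk : m ≤ k := le_max_left _ _
  set j : ℕ := (k - m).toNat
  have hkj : (m : ℝ) + j = k := by
    have : ((k - m).toNat : ℤ) = k - m := Int.toNat_of_nonneg (by omega)
    rw [show ((j:ℝ)) = ((k - m : ℤ) : ℝ) by exact_mod_cast congrArg (Int.cast : ℤ → ℝ) this]; push_cast; ring
  refine (step m j).mono_set ?_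
  rw [Set.uIcc_of_le hab, Set.uIcc_of_le (by rw [hkj]; exact_mod_cast hjk)]
  apply Set.Icc_subset_Icc
  · exact Int.floor_le a
  · rw [hkj]
    calc b ≤ (⌈b⌉ : ℝ) := Int.le_ceil b
    _ ≤ k := by exact_mod_cast le_max_right _ _

theorem aux_Rbound (ρ : ℝ → ℝ) (hper : Function.Periodic ρ 1)
    (hII : ∀ a b : ℝ, IntervalIntegrable ρ volume a b)
    (hmean : ∫ t in (0:ℝ)..1, ρ t = 0) (y : ℝ) :
    |∫ t in (0:ℝ)..y, ρ t| ≤ 1 / 2 * ∫ t in (0:ℝ)..1, |ρ t| := by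
  set R : ℝ → ℝ := fun y => ∫ t in (0:ℝ)..y, ρ t with hR
  have Rper : Function.Periodic R 1 := by
    intro x
    have h1 : R (x + 1) = R x + ∫ t in x..(x+1), ρ t :=
      (integral_add_adjacent_intervals (hII 0 x) (hII x (x+1))).symm
    have h2 : (∫ t in x..(x+1), ρ t) = ∫ t in (0:ℝ)..1, ρ t := by
      simpa using hper.intervalIntegral_add_eq x 0
    rw [h1, h2, hmean, add_zero]
  -- reduce to y ∈ [0,1)
  have hbase : ∀ z ∈ Set.Icc (0:ℝ) 1, |R z| ≤ 1 / 2 * ∫ t in (0:ℝ)..1, |ρ t| := by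
    intro z hz
    have hA : |R z| ≤ ∫ t in (0:ℝ)..z, |ρ t| := by
      simpa using intervalIntegral.abs_integral_le_integral_abs hz.1
    have hsplit : (∫ t in (0:ℝ)..z, ρ t) + ∫ t in z..1, ρ t = ∫ t in (0:ℝ)..1, ρ t :=
      integral_add_adjacent_intervals (hII 0 z) (hII z 1)
    have hB : |R z| ≤ ∫ t in z..1, |ρ t| := by
      have : R z = -∫ t in z..1, ρ t := by rw [hR]; simp only; linarith [hsplit, hmean]
      rw [this, abs_neg]
      simpa using intervalIntegral.abs_integral_le_integral_abs hz.2
    have habs : (∫ t in (0:ℝ)..z, |ρ t|) + ∫ t in z..1, |ρ t| = ∫ t in (0:ℝ)..1, |ρ t| :=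
      integral_add_adjacent_intervals (hII 0 z).abs (hII z 1).abs
    linarith
  have hfr : R y = R (Int.fract y) := by
    have := Rper.sub_int_mul_eq (x := y) ⌊y⌋
    rw [Int.fract]
    simpa using this.symm
  rw [show |∫ t in (0:ℝ)..y, ρ t| = |R y| from rfl, hfr]
  exact hbase _ ⟨Int.fract_nonneg y, (Int.fract_lt_one y).le⟩

theorem aux_fubini (w : ℝ → ℝ) (hw : IntervalIntegrable w volume 0 1)
    (v : ℝ → ℝ) (hv : ContDiff ℝ 1 v) (hv0 : v 0 = 0) :
    ∫ x in (0:ℝ)..1, w x * v x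
      = ∫ t in (0:ℝ)..1, (∫ x in t..1, w x) * deriv v t := by
  set g : ℝ → ℝ := deriv v with hg
  have hgc : Continuous g := (hv.continuous_deriv le_rfl)
  set μ : Measure ℝ := volume.restrict (Set.Ioc (0:ℝ) 1) with hμ
  set F : ℝ × ℝ → ℝ :=
    Set.indicator {q : ℝ × ℝ | q.2 ≤ q.1} (fun q => w q.1 * g q.2) with hF
  have hwμ : Integrable w μ := by
    rw [hμ]
    exact (intervalIntegrable_iff_integrableOn_Ioc_of_le zero_le_one).mp hw
  have hgμ : Integrable g μ := by
    rw [hμ]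
    exact (hgc.intervalIntegrable 0 1).1
  have hFint : Integrable F (μ.prod μ) := by
    refine (Integrable.mul_prod hwμ hgμ).indicator ?_
    exact measurableSet_le measurable_snd measurable_fst
  have hswap : ∫ x, (∫ t, F (x, t) ∂μ) ∂μ = ∫ t, (∫ x, F (x, t) ∂μ) ∂μ :=
    integral_integral_swap (f := fun x t => F (x, t)) hFint
  have hL : ∫ x, (∫ t, F (x, t) ∂μ) ∂μ = ∫ x in (0:ℝ)..1, w x * v x := by
    rw [intervalIntegral.integral_of_le zero_le_one, hμ]
    refine setIntegral_congr_fun measurableSet_Ioc (fun x hx => ?_)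
    have hFx : (fun t => F (x, t)) = Set.indicator (Set.Iic x) (fun t => w x * g t) := by
      funext t
      simp [hF, Set.indicator_apply, Set.mem_Iic, Set.mem_setOf_eq]
    rw [hFx, MeasureTheory.integral_indicator measurableSet_Iic,
      Measure.restrict_restrict measurableSet_Iic]
    have hset : Set.Iic x ∩ Set.Ioc 0 1 = Set.Ioc 0 x := by
      ext t
      simp only [Set.mem_inter_iff, Set.mem_Iic, Set.mem_Ioc]
      exact ⟨fun h => ⟨h.2.1, h.1⟩, fun h => ⟨h.2, h.1, h.2.trans hx.2⟩⟩
    rw [hset, ← intervalIntegral.integral_of_le hx.1.le,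
      intervalIntegral.integral_const_mul]
    have hvx : v x = ∫ t in (0:ℝ)..x, g t := by
      rw [hg, intervalIntegral.integral_deriv_eq_sub
        (fun y _ => (hv.differentiable one_ne_zero).differentiableAt)
        (hgc.intervalIntegrable 0 x), hv0, sub_zero]
    rw [hvx]
  have hRt : ∫ t, (∫ x, F (x, t) ∂μ) ∂μ = ∫ t in (0:ℝ)..1, (∫ x in t..1, w x) * g t := by
    rw [intervalIntegral.integral_of_le zero_le_one, hμ]
    refine setIntegral_congr_fun measurableSet_Ioc (fun t ht => ?_)
    have hFt : (fun x => F (x, t)) = Set.indicator (Set.Ici t) (fun x => w x * g t) := by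
      funext x
      simp [hF, Set.indicator_apply, Set.mem_Ici, Set.mem_setOf_eq]
    rw [hFt, MeasureTheory.integral_indicator measurableSet_Ici,
      Measure.restrict_restrict measurableSet_Ici]
    have hset : Set.Ici t ∩ Set.Ioc 0 1 = Set.Icc t 1 := by
      ext x
      simp only [Set.mem_inter_iff, Set.mem_Ici, Set.mem_Ioc, Set.mem_Icc]
      exact ⟨fun h => ⟨h.1, h.2.2⟩, fun h => ⟨h.1, ht.1.trans_le h.1, h.2⟩⟩
    rw [hset, integral_Icc_eq_integral_Ioc, ← intervalIntegral.integral_of_le ht.2,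
      intervalIntegral.integral_mul_const]
  rw [← hL, hswap, hRt]

/-- One-dimensional oscillation estimate: for a `1`-periodic `ρ ∈ L¹(0,1)` with zero
mean, and any `C¹` function `v` with `v(0) = v(1) = 0`,
`|∫₀¹ ρ(x/ε) v(x) dx| ≤ ½ ‖ρ‖_{L¹(0,1)} ε ∫₀¹ |v'|`. -/
theorem oneDim_oscillation_estimate (ρ : ℝ → ℝ) (hper : Function.Periodic ρ 1)
    (hint : IntervalIntegrable ρ volume 0 1)
    (hmean : ∫ t in (0:ℝ)..1, ρ t = 0)
    (ε : ℝ) (hε : 0 < ε)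
    (v : ℝ → ℝ) (hv : ContDiff ℝ 1 v) (hv0 : v 0 = 0) (hv1 : v 1 = 0) :
    |∫ x in (0:ℝ)..1, ρ (x / ε) * v x| ≤
      1 / 2 * (∫ t in (0:ℝ)..1, |ρ t|) * ε * ∫ x in (0:ℝ)..1, |deriv v x| := by
  have hII := aux_perInt ρ hper hint
  set g : ℝ → ℝ := deriv v with hg
  have hgc : Continuous g := hv.continuous_deriv le_rfl
  set w : ℝ → ℝ := fun x => ρ (x / ε) with hwdef
  have hw : IntervalIntegrable w volume 0 1 := by
    have h := (hII 0 ε⁻¹).comp_mul_right (c := ε⁻¹)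
    simpa [hwdef, div_eq_mul_inv, inv_mul_cancel₀ hε.ne'] using h
  set R : ℝ → ℝ := fun y => ∫ s in (0:ℝ)..y, ρ s with hRdef
  have hRc : Continuous R := intervalIntegral.continuous_primitive hII 0
  have hRb : ∀ y, |R y| ≤ 1 / 2 * ∫ t in (0:ℝ)..1, |ρ t| :=
    aux_Rbound ρ hper hII hmean
  have hcR : Continuous fun t : ℝ => R (t / ε) := by
    exact hRc.comp (continuous_id.div_const ε)
  have hWt : ∀ t : ℝ, (∫ x in t..1, w x) = ε * (R (1/ε) - R (t/ε)) := by
    intro t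
    rw [hwdef]
    simp only
    rw [intervalIntegral.integral_comp_div (f := ρ) hε.ne', smul_eq_mul,
      ← intervalIntegral.integral_interval_sub_left (hII 0 (1/ε)) (hII 0 (t/ε))]
  have hg0 : (∫ t in (0:ℝ)..1, g t) = 0 := by
    rw [hg, intervalIntegral.integral_deriv_eq_sub
      (fun y _ => (hv.differentiable one_ne_zero).differentiableAt)
      (hgc.intervalIntegrable 0 1), hv1, hv0, sub_zero]
  have hI : (∫ x in (0:ℝ)..1, ρ (x / ε) * v x)
      = -(ε * ∫ t in (0:ℝ)..1, R (t/ε) * g t) := by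
    have h1 := aux_fubini w hw v hv hv0
    have h2 : (∫ t in (0:ℝ)..1, (∫ x in t..1, w x) * g t)
        = ∫ t in (0:ℝ)..1, ((ε * R (1/ε)) * g t - ε * (R (t/ε) * g t)) := by
      refine intervalIntegral.integral_congr (fun t _ => ?_)
      rw [hWt t]; ring
    have h3 : (∫ t in (0:ℝ)..1, ((ε * R (1/ε)) * g t - ε * (R (t/ε) * g t)))
        = (ε * R (1/ε)) * (∫ t in (0:ℝ)..1, g t)
          - ε * ∫ t in (0:ℝ)..1, R (t/ε) * g t := by
      rw [intervalIntegral.integral_sub (f := fun t => (ε * R (1/ε)) * g t)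
        (g := fun t => ε * (R (t/ε) * g t))
        ((continuous_const.mul hgc).intervalIntegrable 0 1)
        ((continuous_const.mul (hcR.mul hgc)).intervalIntegrable 0 1),
        intervalIntegral.integral_const_mul, intervalIntegral.integral_const_mul]
    rw [show (∫ x in (0:ℝ)..1, ρ (x / ε) * v x) = ∫ x in (0:ℝ)..1, w x * v x from rfl,
      h1, h2, h3, hg0, mul_zero, zero_sub]
  set T : ℝ := ∫ t in (0:ℝ)..1, |ρ t| with hT
  set J : ℝ := ∫ t in (0:ℝ)..1, R (t/ε) * g t with hJ
  have hJb : |J| ≤ 1 / 2 * T * ∫ x in (0:ℝ)..1, |g x| := by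
    have h4 : |J| ≤ ∫ t in (0:ℝ)..1, |R (t/ε) * g t| := by
      simpa [hJ] using intervalIntegral.abs_integral_le_integral_abs
        (f := fun t => R (t/ε) * g t) (zero_le_one)
    have h5 : (∫ t in (0:ℝ)..1, |R (t/ε) * g t|)
        ≤ ∫ t in (0:ℝ)..1, (1 / 2 * T) * |g t| := by
      refine intervalIntegral.integral_mono_on zero_le_one
        ((hcR.mul hgc).abs.intervalIntegrable 0 1)
        ((continuous_const.mul hgc.abs).intervalIntegrable 0 1) (fun t _ => ?_)
      rw [abs_mul]
      exact mul_le_mul_of_nonneg_right (hRb _) (abs_nonneg _)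
    rw [intervalIntegral.integral_const_mul] at h5
    linarith
  have hT0 : 0 ≤ T := intervalIntegral.integral_nonneg zero_le_one (fun t _ => abs_nonneg _)
  rw [hI, abs_neg, abs_mul, abs_of_pos hε]
  calc ε * |J| ≤ ε * (1 / 2 * T * ∫ x in (0:ℝ)..1, |g x|) := by
        exact mul_le_mul_of_nonneg_left hJb hε.le
    _ = 1 / 2 * T * ε * ∫ x in (0:ℝ)..1, |g x| := by ring
end

section
/- Let p > 1 and let ρ : ℝ → ℝ be a 1-periodic function which is integrable on [0,1], with average ρ̄ = ∫₀¹ ρ(t) dt. Then for every ε > 0 and every continuously differentiable function u : ℝ → ℝ with u(0) = u(1) = 0, | ∫₀¹ (ρ(x/ε) − ρ̄) |u(x)|^p dx | ≤ (p/2) · ε · (∫₀¹ |ρ(t) − ρ̄| dt) · ‖u‖_{L^p(0,1)}^{p−1} · ‖u'‖_{L^p(0,1)}. -/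
open MeasureTheory intervalIntegral Set

private lemma abs_rpow_succ {p : ℝ} (hp : 1 < p) (y : ℝ) :
    |y| ^ (p - 2) * |y| = |y| ^ (p - 1) := by
  rcases eq_or_ne y 0 with rfl | hy
  · simp [Real.zero_rpow (show p - 1 ≠ 0 by linarith)]
  · rw [show p - 1 = (p - 2) + 1 by ring, Real.rpow_add (abs_pos.2 hy), Real.rpow_one]

private lemma periodic_intervalIntegrable {ρ : ℝ → ℝ} (hper : Function.Periodic ρ 1)
    (hint : IntervalIntegrable ρ volume 0 1) :
    ∀ a b : ℝ, IntervalIntegrable ρ volume a b := by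
  have key : ∀ n : ℤ, IntervalIntegrable ρ volume n (n + 1) := by
    intro n
    have h1 := hint.comp_add_right (-n : ℝ)
    have h2 : (fun x => ρ (x + (-n : ℝ))) = ρ := by
      funext x
      have h3 := hper.sub_int_mul_eq (n := n) (x := x)
      rw [mul_one] at h3
      rw [show x + (-n : ℝ) = x - n by ring, h3]
    rw [h2] at h1
    convert h1 using 1 <;> ring
  have chain : ∀ (m : ℤ) (k : ℕ), IntervalIntegrable ρ volume m (m + k) := by
    intro m k
    induction k with
    | zero => simp
    | succ k ih =>
      have h4 := key (m + k)
      push_cast at h4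
      push_cast
      rw [show (m : ℝ) + ((k : ℝ) + 1) = (m : ℝ) + (k : ℝ) + 1 by ring]
      exact ih.trans h4
  have main : ∀ a b : ℝ, a ≤ b → IntervalIntegrable ρ volume a b := by
    intro a b hab
    have h1 : (⌊a⌋ : ℝ) ≤ a := Int.floor_le a
    have hnn : 0 ≤ ⌈b⌉ - ⌊a⌋ := by
      have := Int.floor_mono hab
      have := Int.floor_le_ceil b
      omega
    have hk2 : b ≤ (⌊a⌋ : ℝ) + ((⌈b⌉ - ⌊a⌋).toNat : ℝ) := by
      have h9 : ((⌈b⌉ - ⌊a⌋).toNat : ℝ) = (⌈b⌉ : ℝ) - (⌊a⌋ : ℝ) := by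
        norm_cast
        omega
      rw [h9]
      have := Int.le_ceil b
      linarith
    refine (chain ⌊a⌋ (⌈b⌉ - ⌊a⌋).toNat).mono_set ?_
    rw [uIcc_of_le hab, uIcc_of_le (by linarith)]
    exact Icc_subset_Icc h1 hk2
  intro a b
  rcases le_total a b with h | h
  · exact main a b h
  · exact (main b a h).symm

private lemma primitive_bound {f : ℝ → ℝ} (hper : Function.Periodic f 1)
    (hall : ∀ a b : ℝ, IntervalIntegrable f volume a b)
    (h0 : (∫ t in (0:ℝ)..1, f t) = 0) (y : ℝ) :
    |∫ t in (0:ℝ)..y, f t| ≤ (∫ t in (0:ℝ)..1, |f t|) / 2 := by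
  have base : ∀ w : ℝ, 0 ≤ w → w ≤ 1 →
      |∫ t in (0:ℝ)..w, f t| ≤ (∫ t in (0:ℝ)..1, |f t|) / 2 := by
    intro w h0w hw1
    have hA : |∫ t in (0:ℝ)..w, f t| ≤ ∫ t in (0:ℝ)..w, |f t| :=
      intervalIntegral.abs_integral_le_integral_abs h0w
    have hsplit : (∫ t in (0:ℝ)..w, f t) + ∫ t in w..1, f t = 0 := by
      rw [intervalIntegral.integral_add_adjacent_intervals (hall 0 w) (hall w 1)]
      exact h0
    have hB : |∫ t in (0:ℝ)..w, f t| ≤ ∫ t in w..1, |f t| := by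
      have h5 : (∫ t in (0:ℝ)..w, f t) = -∫ t in w..1, f t := by linarith
      rw [h5, abs_neg]
      exact intervalIntegral.abs_integral_le_integral_abs hw1
    have hsum : (∫ t in (0:ℝ)..w, |f t|) + ∫ t in w..1, |f t| = ∫ t in (0:ℝ)..1, |f t| :=
      intervalIntegral.integral_add_adjacent_intervals (hall 0 w).abs (hall w 1).abs
    linarith
  have key : (∫ t in (0:ℝ)..y, f t) = ∫ t in (0:ℝ)..(y - ⌊y⌋), f t := by
    have hsplit := intervalIntegral.integral_add_adjacent_intervals
      (hall 0 (⌊y⌋ : ℝ)) (hall (⌊y⌋ : ℝ) y)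
    have h1 : (∫ t in (0:ℝ)..(⌊y⌋ : ℝ), f t) = 0 := by
      have h4 := hper.intervalIntegral_add_zsmul_eq ⌊y⌋ 0 hall
      simp only [zero_add, zsmul_eq_mul, mul_one] at h4
      rw [h0, mul_zero] at h4
      exact h4
    have h2 : (∫ t in (⌊y⌋ : ℝ)..y, f t) = ∫ t in (0:ℝ)..(y - ⌊y⌋), f t := by
      have h3 : (∫ t in (0:ℝ)..(y - ⌊y⌋), f (t + ⌊y⌋))
          = ∫ t in ((0:ℝ) + ⌊y⌋)..((y - ⌊y⌋) + ⌊y⌋), f t :=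
        intervalIntegral.integral_comp_add_right _ _
      rw [zero_add, sub_add_cancel] at h3
      rw [← h3]
      congr 1
      funext t
      have h6 := hper.sub_int_mul_eq (n := -⌊y⌋) (x := t)
      rw [mul_one] at h6
      rw [show t + (⌊y⌋ : ℝ) = t - ((-⌊y⌋ : ℤ) : ℝ) by push_cast; ring, h6]
    rw [← hsplit, h1, zero_add, h2]
  rw [key]
  have hfl := Int.floor_le y
  have hfl2 := Int.lt_floor_add_one y
  exact base _ (by linarith) (by linarith)

/-- One-dimensional estimate for the `p`-power: for `p > 1`, a `1`-periodic
`ρ ∈ L¹(0,1)` with mean `ρ̄`, and any `C¹` function `u` with `u(0) = u(1) = 0`,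
`|∫₀¹ (ρ(x/ε) − ρ̄)|u|^p| ≤ (p/2) ε ‖ρ − ρ̄‖_{L¹(0,1)} ‖u‖_{L^p}^{p−1} ‖u'‖_{L^p}`. -/
theorem oneDim_power_estimate (p : ℝ) (hp : 1 < p)
    (ρ : ℝ → ℝ) (hper : Function.Periodic ρ 1)
    (hint : IntervalIntegrable ρ volume 0 1)
    (ρbar : ℝ) (hbar : ρbar = ∫ t in (0:ℝ)..1, ρ t)
    (ε : ℝ) (hε : 0 < ε)
    (u : ℝ → ℝ) (hu : ContDiff ℝ 1 u) (hu0 : u 0 = 0) (hu1 : u 1 = 0) :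
    |∫ x in (0:ℝ)..1, (ρ (x / ε) - ρbar) * |u x| ^ p| ≤
      p / 2 * ε * (∫ t in (0:ℝ)..1, |ρ t - ρbar|) *
        ((∫ x in (0:ℝ)..1, |u x| ^ p) ^ (1 / p)) ^ (p - 1) *
        (∫ x in (0:ℝ)..1, |deriv u x| ^ p) ^ (1 / p) := by
  have huc : Continuous u := hu.continuous
  have hu' : Continuous (deriv u) := hu.continuous_deriv le_rfl
  set f : ℝ → ℝ := fun t => ρ t - ρbar with hf_def
  have hfper : Function.Periodic f 1 := fun x => by simp only [hf_def, hper x]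
  have hρall := periodic_intervalIntegrable hper hint
  have hfall : ∀ a b : ℝ, IntervalIntegrable f volume a b := fun a b =>
    (hρall a b).sub intervalIntegrable_const
  have hf0 : (∫ t in (0:ℝ)..1, f t) = 0 := by
    rw [hf_def]
    rw [intervalIntegral.integral_sub (hρall 0 1) intervalIntegrable_const, hbar]
    simp
  set I : ℝ := ∫ t in (0:ℝ)..1, |f t| with hI_def
  have hI0 : 0 ≤ I := intervalIntegral.integral_nonneg zero_le_one (fun x _ => abs_nonneg _)
  have hRbound : ∀ y : ℝ, |∫ t in (0:ℝ)..y, f t| ≤ I / 2 :=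
    primitive_bound hfper hfall hf0
  -- the function g = |u|^p and its derivative
  set g : ℝ → ℝ := fun x => |u x| ^ p with hg_def
  set G' : ℝ → ℝ := fun x => p * |u x| ^ (p - 2) * u x * deriv u x with hG'_def
  have hgderiv : ∀ x : ℝ, HasDerivAt g (G' x) x := by
    intro x
    exact (hasDerivAt_abs_rpow (u x) hp).comp x ((hu.differentiable one_ne_zero) x).hasDerivAt
  have habs_G' : ∀ x : ℝ, |G' x| = p * |u x| ^ (p - 1) * |deriv u x| := by
    intro x
    show |p * |u x| ^ (p - 2) * u x * deriv u x| = _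
    rw [abs_mul, abs_mul, abs_mul, abs_of_pos (by linarith : (0:ℝ) < p),
      abs_of_nonneg (Real.rpow_nonneg (abs_nonneg _) _),
      mul_assoc p (|u x| ^ (p - 2)) |u x|, abs_rpow_succ hp (u x)]
  -- integrability facts
  haveI hfin : IsFiniteMeasure (volume.restrict (Ioc (0:ℝ) 1)) := by
    constructor
    rw [Measure.restrict_apply_univ, Real.volume_Ioc]
    exact ENNReal.ofReal_lt_top
  have hdomc : Continuous fun x => p * |u x| ^ (p - 1) * |deriv u x| :=
    (continuous_const.mul ((continuous_abs.comp huc).rpow_const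
      fun x => Or.inr (by linarith))).mul hu'.abs
  have hG'meas : Measurable G' := by
    have hmr : Measurable fun x : ℝ => |u x| ^ (p - 2) := by
      have h1 : Measurable fun y : ℝ => y ^ (p - 2) := by measurability
      exact h1.comp huc.abs.measurable
    exact ((measurable_const.mul hmr).mul huc.measurable).mul hu'.measurable
  obtain ⟨C, hC⟩ := isCompact_Icc.exists_bound_of_continuousOn
    (s := Icc (0:ℝ) 1) hdomc.continuousOn
  have hG'Icc : IntegrableOn G' (Icc (0:ℝ) 1) volume := by
    haveI : IsFiniteMeasure (volume.restrict (Icc (0:ℝ) 1)) := by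
      constructor
      rw [Measure.restrict_apply_univ, Real.volume_Icc]
      exact ENNReal.ofReal_lt_top
    apply Integrable.mono' (integrable_const C) hG'meas.aestronglyMeasurable.restrict
    filter_upwards [ae_restrict_mem measurableSet_Icc] with x hx
    rw [Real.norm_eq_abs, habs_G' x]
    have h7 := hC x hx
    rw [Real.norm_eq_abs] at h7
    exact (le_abs_self _).trans h7
  have hG'int : IntegrableOn G' (Ioc (0:ℝ) 1) volume :=
    hG'Icc.mono_set Ioc_subset_Icc_self
  have hfε : IntegrableOn (fun x => f (x / ε)) (Ioc (0:ℝ) 1) volume := by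
    have h1 := (hfall 0 ε⁻¹).comp_mul_left (c := ε⁻¹)
    rw [zero_div, div_self (by positivity : (ε:ℝ)⁻¹ ≠ 0)] at h1
    have h2 : (fun x => f (ε⁻¹ * x)) = fun x => f (x / ε) := by
      funext x; rw [div_eq_inv_mul]
    rw [h2] at h1
    exact h1.1
  -- FTC : for x in (0,1], ∫_x^1 G' = -g x
  have hFTC : ∀ x ∈ Ioc (0:ℝ) 1, (∫ s in x..1, G' s) = -g x := by
    intro x hx
    have hsub : uIcc x 1 ⊆ Icc (0:ℝ) 1 := by
      rw [uIcc_of_le hx.2]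
      exact Icc_subset_Icc hx.1.le le_rfl
    have h1 : IntervalIntegrable G' volume x 1 := (hG'Icc.mono_set hsub).intervalIntegrable
    rw [intervalIntegral.integral_eq_sub_of_hasDerivAt (fun s _ => hgderiv s) h1]
    have h8 : g 1 = 0 := by
      show |u 1| ^ p = 0
      rw [hu1, abs_zero, Real.zero_rpow (by linarith : p ≠ 0)]
    rw [h8]
    ring
  -- double integral setup
  set S : Set (ℝ × ℝ) := {q : ℝ × ℝ | q.1 < q.2} with hS_def
  have hSmeas : MeasurableSet S := measurableSet_lt measurable_fst measurable_snd
  set K : ℝ × ℝ → ℝ := fun q => f (q.1 / ε) * G' q.2 with hK_def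
  have hKint : Integrable (S.indicator K)
      ((volume.restrict (Ioc (0:ℝ) 1)).prod (volume.restrict (Ioc (0:ℝ) 1))) :=
    (Integrable.mul_prod hfε hG'int).indicator hSmeas
  have inner1 : ∀ x ∈ Ioc (0:ℝ) 1,
      (∫ s in Ioc (0:ℝ) 1, S.indicator K (x, s)) = -(f (x / ε) * g x) := by
    intro x hx
    have e1 : (fun s => S.indicator K (x, s))
        = (Ioi x).indicator (fun s => f (x / ε) * G' s) := by
      funext s
      by_cases h : x < s
      · rw [Set.indicator_of_mem (show (x, s) ∈ S from h),
          Set.indicator_of_mem (mem_Ioi.mpr h)]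
      · rw [Set.indicator_of_notMem (show (x, s) ∉ S from h),
          Set.indicator_of_notMem (by simpa using h)]
    rw [e1, MeasureTheory.integral_indicator measurableSet_Ioi,
      Measure.restrict_restrict measurableSet_Ioi]
    have e2 : Ioi x ∩ Ioc (0:ℝ) 1 = Ioc x 1 := by
      ext z
      simp only [mem_inter_iff, mem_Ioi, mem_Ioc]
      constructor
      · rintro ⟨h1, _, h3⟩; exact ⟨h1, h3⟩
      · rintro ⟨h1, h2⟩; exact ⟨h1, lt_trans hx.1 h1, h2⟩
    rw [e2, MeasureTheory.integral_const_mul, ← intervalIntegral.integral_of_le hx.2,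
      hFTC x hx]
    ring
  have inner2 : ∀ s ∈ Ioc (0:ℝ) 1,
      (∫ x in Ioc (0:ℝ) 1, S.indicator K (x, s))
        = G' s * (ε * ∫ t in (0:ℝ)..(s / ε), f t) := by
    intro s hs
    have e1 : (fun x => S.indicator K (x, s))
        = (Iio s).indicator (fun x => f (x / ε) * G' s) := by
      funext x
      by_cases h : x < s
      · rw [Set.indicator_of_mem (show (x, s) ∈ S from h),
          Set.indicator_of_mem (mem_Iio.mpr h)]
      · rw [Set.indicator_of_notMem (show (x, s) ∉ S from h),
          Set.indicator_of_notMem (by simpa using h)]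
    rw [e1, MeasureTheory.integral_indicator measurableSet_Iio,
      Measure.restrict_restrict measurableSet_Iio]
    have e2 : Iio s ∩ Ioc (0:ℝ) 1 = Ioo 0 s := by
      ext z
      simp only [mem_inter_iff, mem_Iio, mem_Ioc, mem_Ioo]
      constructor
      · rintro ⟨h1, h2, _⟩; exact ⟨h2, h1⟩
      · rintro ⟨h1, h2⟩; exact ⟨h2, h1, le_trans h2.le hs.2⟩
    rw [e2, MeasureTheory.integral_mul_const, ← MeasureTheory.integral_Ioc_eq_integral_Ioo,
      ← intervalIntegral.integral_of_le hs.1.le,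
      intervalIntegral.integral_comp_div _ (by positivity : (ε:ℝ) ≠ 0), zero_div, smul_eq_mul]
    ring
  have swap : (∫ x in Ioc (0:ℝ) 1, ∫ s in Ioc (0:ℝ) 1, S.indicator K (x, s))
      = ∫ s in Ioc (0:ℝ) 1, ∫ x in Ioc (0:ℝ) 1, S.indicator K (x, s) :=
    MeasureTheory.integral_integral_swap hKint
  have main_eq : (∫ x in (0:ℝ)..1, (ρ (x / ε) - ρbar) * |u x| ^ p)
      = -∫ s in Ioc (0:ℝ) 1, G' s * (ε * ∫ t in (0:ℝ)..(s / ε), f t) := by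
    have e0 : (∫ x in (0:ℝ)..1, (ρ (x / ε) - ρbar) * |u x| ^ p)
        = ∫ x in Ioc (0:ℝ) 1, f (x / ε) * g x := intervalIntegral.integral_of_le zero_le_one
    rw [e0]
    have e1 : (∫ x in Ioc (0:ℝ) 1, f (x / ε) * g x)
        = ∫ x in Ioc (0:ℝ) 1, -(∫ s in Ioc (0:ℝ) 1, S.indicator K (x, s)) := by
      apply MeasureTheory.integral_congr_ae
      filter_upwards [ae_restrict_mem measurableSet_Ioc] with x hx
      rw [inner1 x hx]
      ring
    rw [e1, MeasureTheory.integral_neg, swap]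
    congr 1
    apply MeasureTheory.integral_congr_ae
    filter_upwards [ae_restrict_mem measurableSet_Ioc] with s hs
    exact inner2 s hs
  -- final estimates
  have hcont1 : Continuous fun s : ℝ => |u s| ^ (p - 1) :=
    (continuous_abs.comp huc).rpow_const fun x => Or.inr (by linarith)
  have hbound : ‖∫ s in Ioc (0:ℝ) 1, G' s * (ε * ∫ t in (0:ℝ)..(s / ε), f t)‖
      ≤ ∫ s in Ioc (0:ℝ) 1, p * (ε * (I / 2)) * (|u s| ^ (p - 1) * |deriv u s|) := by
    apply MeasureTheory.norm_integral_le_of_norm_le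
    · exact (continuous_const.mul (hcont1.mul hu'.abs)).integrableOn_Ioc
    · apply Filter.Eventually.of_forall
      intro s
      rw [Real.norm_eq_abs, abs_mul, habs_G' s]
      have h2 : |ε * ∫ t in (0:ℝ)..(s / ε), f t| ≤ ε * (I / 2) := by
        rw [abs_mul, abs_of_pos hε]
        exact mul_le_mul_of_nonneg_left (hRbound _) hε.le
      calc p * |u s| ^ (p - 1) * |deriv u s| * |ε * ∫ t in (0:ℝ)..(s / ε), f t|
          ≤ p * |u s| ^ (p - 1) * |deriv u s| * (ε * (I / 2)) := by
            apply mul_le_mul_of_nonneg_left h2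
            positivity
        _ = p * (ε * (I / 2)) * (|u s| ^ (p - 1) * |deriv u s|) := by ring
  have hpm1 : p - 1 ≠ 0 := by linarith
  have hpq : (p / (p - 1)).HolderConjugate p := (Real.HolderConjugate.conjExponent hp).symm
  have hmem1 : MemLp (fun s : ℝ => |u s| ^ (p - 1)) (ENNReal.ofReal (p / (p - 1)))
      (volume.restrict (Ioc (0:ℝ) 1)) := by
    obtain ⟨C1, hC1⟩ := isCompact_Icc.exists_bound_of_continuousOn
      (s := Icc (0:ℝ) 1) hcont1.continuousOn
    exact MemLp.of_bound hcont1.aestronglyMeasurable.restrict C1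
      (by filter_upwards [ae_restrict_mem measurableSet_Ioc] with x hx
          exact hC1 x (Ioc_subset_Icc_self hx))
  have hmem2 : MemLp (fun s : ℝ => |deriv u s|) (ENNReal.ofReal p)
      (volume.restrict (Ioc (0:ℝ) 1)) := by
    obtain ⟨C2, hC2⟩ := isCompact_Icc.exists_bound_of_continuousOn
      (s := Icc (0:ℝ) 1) hu'.abs.continuousOn
    exact MemLp.of_bound hu'.abs.aestronglyMeasurable.restrict C2
      (by filter_upwards [ae_restrict_mem measurableSet_Ioc] with x hx
          exact hC2 x (Ioc_subset_Icc_self hx))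
  have holder := MeasureTheory.integral_mul_le_Lp_mul_Lq_of_nonneg
      (μ := volume.restrict (Ioc (0:ℝ) 1)) hpq
      (Filter.Eventually.of_forall fun s => Real.rpow_nonneg (abs_nonneg _) _)
      (Filter.Eventually.of_forall fun s => abs_nonneg _) hmem1 hmem2
  have hq_rw : (∫ s in Ioc (0:ℝ) 1, (|u s| ^ (p - 1)) ^ (p / (p - 1)))
      = ∫ s in Ioc (0:ℝ) 1, |u s| ^ p := by
    apply MeasureTheory.integral_congr_ae
    apply Filter.Eventually.of_forall
    intro s
    show (|u s| ^ (p - 1)) ^ (p / (p - 1)) = |u s| ^ p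
    rw [← Real.rpow_mul (abs_nonneg _)]
    congr 1
    field_simp
  have hA0 : 0 ≤ ∫ s in Ioc (0:ℝ) 1, |u s| ^ p :=
    MeasureTheory.integral_nonneg fun s => Real.rpow_nonneg (abs_nonneg _) _
  have hpow_rw : (∫ s in Ioc (0:ℝ) 1, |u s| ^ p) ^ (1 / (p / (p - 1)))
      = ((∫ s in Ioc (0:ℝ) 1, |u s| ^ p) ^ (1 / p)) ^ (p - 1) := by
    rw [← Real.rpow_mul hA0]
    congr 1
    rw [one_div_div]
    ring
  calc |∫ x in (0:ℝ)..1, (ρ (x / ε) - ρbar) * |u x| ^ p|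
      = ‖∫ s in Ioc (0:ℝ) 1, G' s * (ε * ∫ t in (0:ℝ)..(s / ε), f t)‖ := by
        rw [main_eq, Real.norm_eq_abs, abs_neg]
    _ ≤ ∫ s in Ioc (0:ℝ) 1, p * (ε * (I / 2)) * (|u s| ^ (p - 1) * |deriv u s|) := hbound
    _ = p * (ε * (I / 2)) * ∫ s in Ioc (0:ℝ) 1, |u s| ^ (p - 1) * |deriv u s| :=
        MeasureTheory.integral_const_mul _ _
    _ ≤ p * (ε * (I / 2)) *
        (((∫ s in Ioc (0:ℝ) 1, |u s| ^ p) ^ (1 / p)) ^ (p - 1) *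
          (∫ s in Ioc (0:ℝ) 1, |deriv u s| ^ p) ^ (1 / p)) := by
        apply mul_le_mul_of_nonneg_left _
          (mul_nonneg (by linarith) (mul_nonneg hε.le (by linarith)))
        calc (∫ s in Ioc (0:ℝ) 1, |u s| ^ (p - 1) * |deriv u s|)
            ≤ (∫ s in Ioc (0:ℝ) 1, (|u s| ^ (p - 1)) ^ (p / (p - 1))) ^ (1 / (p / (p - 1))) *
              (∫ s in Ioc (0:ℝ) 1, |deriv u s| ^ p) ^ (1 / p) := holder
          _ = _ := by rw [hq_rw, hpow_rw]
    _ = p / 2 * ε * (∫ t in (0:ℝ)..1, |ρ t - ρbar|) *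
        ((∫ x in (0:ℝ)..1, |u x| ^ p) ^ (1 / p)) ^ (p - 1) *
        (∫ x in (0:ℝ)..1, |deriv u x| ^ p) ^ (1 / p) := by
        rw [show (∫ x in (0:ℝ)..1, |u x| ^ p) = ∫ s in Ioc (0:ℝ) 1, |u s| ^ p from
            intervalIntegral.integral_of_le zero_le_one,
          show (∫ x in (0:ℝ)..1, |deriv u x| ^ p) = ∫ s in Ioc (0:ℝ) 1, |deriv u s| ^ p from
            intervalIntegral.integral_of_le zero_le_one,
          show (∫ t in (0:ℝ)..1, |ρ t - ρbar|) = I from rfl]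
        ring
end
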